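/- Let n be a positive integer, q the largest prime factor of n with ν_q(n) = t, and suppose n ≤ q^{2t} - 1. Then for any integer k with 1 ≤ k ≤ n and gcd(k, n) = 1, n² does not divide the binomial coefficient C(n, k). -/
import Mathlib


open Finset

/-- The family of `k`-element subsets of `G` whose elements sum to `x`. -/
def sumBlocks (G : Type) [AddCommGroup G] [Fintype G] [DecidableEq G]
    (k : ℕ) (x : G) : Finset (Finset G) :=
  Finset.univ.filter (fun T => T.card = k ∧ T.sum id = x)

/-- The family of `k`-element subsets of `G \ {0}` whose elements sum to `x`. -/
def sumBlocksStar (G : Type) [AddCommGroup G] [Fintype G] [DecidableEq G]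
    (k : ℕ) (x : G) : Finset (Finset G) :=
  Finset.univ.filter (fun T => T.card = k ∧ T.sum id = x ∧ (0 : G) ∉ T)

/-- `(G, B_k^x)` is a 1-design: the block family is nonempty and every
point of `G` lies in the same number of blocks. -/
def isOneDesign (G : Type) [AddCommGroup G] [Fintype G] [DecidableEq G]
    (k : ℕ) (x : G) : Prop :=
  sumBlocks G k x ≠ ∅ ∧ ∃ r : ℕ, ∀ y : G,
    ((sumBlocks G k x).filter (fun B => y ∈ B)).card = r

/-- `e(x) = max {d : d ∣ exp(G), x ∈ dG}`. -/
noncomputable def eMax (G : Type) [AddCommGroup G] [Fintype G] [DecidableEq G] (x : G) : ℕ :=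
  Nat.findGreatest (fun d => d ∣ AddMonoid.exponent G ∧ ∃ y : G, d • y = x)
    (AddMonoid.exponent G)

theorem stmt8 (n q t k : ℕ) (hn : 0 < n) (hq : q.Prime) (hqn : q ∣ n)
    (hmax : ∀ r : ℕ, r.Prime → r ∣ n → r ≤ q)
    (ht : n.factorization q = t)
    (hle : n ≤ q ^ (2 * t) - 1)
    (hk1 : 1 ≤ k) (hkn : k ≤ n) (hgcd : Nat.gcd k n = 1) :
    ¬ (n ^ 2 ∣ n.choose k) := by
  intro hdvd
  have hchoose : 0 < n.choose k := Nat.choose_pos hkn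
  have hqt : q ^ t ∣ n := ht ▸ Nat.ordProj_dvd n q
  have hq2t : q ^ (2 * t) ∣ n.choose k := by
    have : q ^ (2 * t) ∣ n ^ 2 := by
      rw [two_mul, pow_add, sq]
      exact mul_dvd_mul hqt hqt
    exact this.trans hdvd
  have h2t : 2 * t ≤ (n.choose k).factorization q :=
    (Nat.Prime.pow_dvd_iff_le_factorization hq hchoose.ne').1 hq2t
  have h1 : (n.choose k).factorization q ≤ Nat.log q n :=
    Nat.factorization_choose_le_log
  have hlt : Nat.log q n < 2 * t := by
    apply Nat.log_lt_of_lt_pow hn.ne'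
    calc n ≤ q ^ (2 * t) - 1 := hle
      _ < q ^ (2 * t) := Nat.sub_lt (pow_pos hq.pos _) one_pos
  omega
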